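/- Let G be a straight chain polyomino with n squares (n ≥ 1). Then the minimum anti-forcing number of G is af(G) = ⌈n/2⌉ and the maximum anti-forcing number is Af(G) = n. -/

import Mathlib

open scoped Classical

variable {V : Type*} [Fintype V] [DecidableEq V]

/-- `M` is a perfect matching of `G`: a set of edges of `G` such that every
vertex lies in exactly one edge of `M`. -/
def IsPM (G : SimpleGraph V) (M : Set (Sym2 V)) : Prop :=
  M ⊆ G.edgeSet ∧ ∀ v : V, ∃! e, e ∈ M ∧ v ∈ e

/-- `M` is the unique perfect matching of `G`. -/
def IsUniquePM (G : SimpleGraph V) (M : Set (Sym2 V)) : Prop :=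
  IsPM G M ∧ ∀ M', IsPM G M' → M' = M

/-- A closed walk `c` is an `M`-alternating cycle: it is a cycle of even length
whose edges lie alternately in `M` and outside `M`. -/
def IsAltCycle {G : SimpleGraph V} (M : Set (Sym2 V)) {v : V} (c : G.Walk v v) : Prop :=
  c.IsCycle ∧ Even c.edges.length ∧
    ((∀ i (h : i < c.edges.length), c.edges.get ⟨i, h⟩ ∈ M ↔ Even i) ∨
     (∀ i (h : i < c.edges.length), c.edges.get ⟨i, h⟩ ∈ M ↔ ¬ Even i))

/-- `S` is an anti-forcing set of the perfect matching `M` of `G`: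
`S` consists of edges of `G` not in `M` and `M` is the unique perfect matching
of `G - S`. -/
def IsAntiForcingSet (G : SimpleGraph V) (M S : Set (Sym2 V)) : Prop :=
  S ⊆ G.edgeSet \ M ∧ IsUniquePM (G.deleteEdges S) M

/-- The anti-forcing number of a perfect matching `M` of `G`. -/
noncomputable def af (G : SimpleGraph V) (M : Set (Sym2 V)) : ℕ :=
  sInf {n | ∃ S : Finset (Sym2 V), S.card = n ∧ IsAntiForcingSet G M ↑S}

/-- The minimum anti-forcing number of `G`. -/
noncomputable def afMin (G : SimpleGraph V) : ℕ :=
  sInf {n | ∃ M, IsPM G M ∧ af G M = n}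

/-- The maximum anti-forcing number of `G`. -/
noncomputable def Af (G : SimpleGraph V) : ℕ :=
  sSup {n | ∃ M, IsPM G M ∧ af G M = n}

/-- The straight chain polyomino with `n` squares: the `2 × (n + 1)` grid
graph. -/
def straightChain (n : ℕ) : SimpleGraph (Fin 2 × Fin (n + 1)) :=
  SimpleGraph.fromRel (fun a b =>
    (a.1 = b.1 ∧ a.2.val + 1 = b.2.val) ∨ (a.2 = b.2 ∧ a.1 ≠ b.1))

namespace SC19



/-- Abstract edges of the ladder graph. -/
inductive AEdge where
  | vert : ℕ → AEdge
  | top : ℕ → AEdge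
  | bot : ℕ → AEdge
deriving DecidableEq

namespace AEdge

def idx : AEdge → ℕ
  | vert i => i
  | top i => i
  | bot i => i

def shift (t : ℕ) : AEdge → AEdge
  | vert i => vert (i - t)
  | top i => top (i - t)
  | bot i => bot (i - t)

end AEdge

/-- column `i` is covered by a horizontal pair of `P`. -/
def cov (P : Finset ℕ) (i : ℕ) : Prop := i ∈ P ∨ ∃ p ∈ P, p + 1 = i

/-- `P` describes a valid tiling of the `2 × c` ladder. -/
def AValid (c : ℕ) (P : Finset ℕ) : Prop := ∀ p ∈ P, p + 1 < c ∧ p + 1 ∉ P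

/-- the abstract perfect matching associated to a tiling `P`. -/
def aM (c : ℕ) (P : Finset ℕ) : Set AEdge :=
  {e | (∃ i, i < c ∧ ¬ cov P i ∧ e = .vert i) ∨ (∃ p ∈ P, e = .top p ∨ e = .bot p)}

@[simp] lemma vert_mem_aM {c : ℕ} {P : Finset ℕ} {i : ℕ} :
    AEdge.vert i ∈ aM c P ↔ i < c ∧ ¬ cov P i := by
  simp [aM]

@[simp] lemma top_mem_aM {c : ℕ} {P : Finset ℕ} {p : ℕ} :
    AEdge.top p ∈ aM c P ↔ p ∈ P := by
  constructor
  · rintro (⟨i, _, _, h⟩ | ⟨q, hq, h | h⟩) <;> simp_all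
  · intro h; exact Or.inr ⟨p, h, Or.inl rfl⟩

@[simp] lemma bot_mem_aM {c : ℕ} {P : Finset ℕ} {p : ℕ} :
    AEdge.bot p ∈ aM c P ↔ p ∈ P := by
  constructor
  · rintro (⟨i, _, _, h⟩ | ⟨q, hq, h | h⟩) <;> simp_all
  · intro h; exact Or.inr ⟨p, h, Or.inr rfl⟩

lemma AValid.subset {c : ℕ} {P Q : Finset ℕ} (h : AValid c P) (hQP : Q ⊆ P) :
    AValid c Q := fun p hp => ⟨(h p (hQP hp)).1, fun hc => (h p (hQP hp)).2 (hQP hc)⟩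

lemma aM_inj {c : ℕ} {P Q : Finset ℕ} (h : aM c P = aM c Q) : P = Q := by
  ext p
  constructor <;> intro hp
  · have : AEdge.top p ∈ aM c P := by simp [hp]
    rw [h] at this; simpa using this
  · have : AEdge.top p ∈ aM c Q := by simp [hp]
    rw [← h] at this; simpa using this

/-- counting lemma: if `S` hits `m` pairwise disjoint sets, then `m ≤ |S|`. -/
lemma card_hits {S : Finset AEdge} : ∀ {m : ℕ} (A : ℕ → Set AEdge),
    (∀ i < m, ∀ i' < m, i ≠ i' → ∀ e, e ∈ A i → e ∉ A i') →
    (∀ i < m, ∃ e ∈ S, e ∈ A i) → m ≤ S.card := by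
  intro m
  induction m generalizing S with
  | zero => intro _ _ _; exact Nat.zero_le _
  | succ m ih =>
    intro A hdisj hex
    obtain ⟨e, heS, heA⟩ := hex m (Nat.lt_succ_self m)
    have hcard : m ≤ (S.erase e).card := by
      apply ih A
      · intro i hi i' hi' hne f hf
        exact hdisj i (hi.trans (Nat.lt_succ_self m)) i' (hi'.trans (Nat.lt_succ_self m)) hne f hf
      · intro i hi
        obtain ⟨f, hfS, hfA⟩ := hex i (hi.trans (Nat.lt_succ_self m))
        refine ⟨f, Finset.mem_erase.mpr ⟨?_, hfS⟩, hfA⟩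
        rintro rfl
        exact hdisj i (hi.trans (Nat.lt_succ_self m)) m (Nat.lt_succ_self m) (Nat.ne_of_lt hi) f hfA heA
    have := Finset.card_erase_of_mem heS
    have h1 : 0 < S.card := Finset.card_pos.mpr ⟨e, heS⟩
    omega



lemma mem_shiftDown {P : Finset ℕ} {t x : ℕ} :
    x ∈ (P.filter (fun p => t ≤ p)).image (· - t) ↔ x + t ∈ P := by
  simp only [Finset.mem_image, Finset.mem_filter]
  constructor
  · rintro ⟨p, ⟨hp, htp⟩, rfl⟩
    have : p - t + t = p := by omega
    rwa [this]
  · intro h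
    exact ⟨x + t, ⟨h, by omega⟩, by omega⟩

lemma mem_shiftDown' {P : Finset ℕ} {t x : ℕ} (h : t ≤ x) (hx : x ∈ P) :
    x - t ∈ (P.filter (fun p => t ≤ p)).image (· - t) := by
  rw [mem_shiftDown]
  have h9 : x - t + t = x := by omega
  rw [h9]
  exact hx

lemma reduce {c t : ℕ} (htc : t ≤ c) {P : Finset ℕ}
    (hP : AValid c P) (hPt : t - 1 ∉ P) (S : Finset AEdge)
    (hS : ∀ e ∈ S, e ∉ aM c P)
    (hhit : ∀ Q, AValid c Q → Q ≠ P → ∃ e ∈ S, e ∈ aM c Q)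
    (IH : ∀ P', AValid (c - t) P' → ∀ S' : Finset AEdge,
      (∀ e ∈ S', e ∉ aM (c - t) P') →
      (∀ Q', AValid (c - t) Q' → Q' ≠ P' → ∃ e ∈ S', e ∈ aM (c - t) Q') →
      (c - t) / 2 ≤ S'.card) :
    (c - t) / 2 ≤ (S.filter (fun e => t ≤ e.idx)).card := by
  set P' : Finset ℕ := (P.filter (fun p => t ≤ p)).image (· - t) with hP'def
  set S' : Finset AEdge := (S.filter (fun e => t ≤ e.idx)).image (AEdge.shift t) with hS'def
  have hmemP' : ∀ x, x ∈ P' ↔ x + t ∈ P := fun x => mem_shiftDown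
  -- P' is valid
  have hP' : AValid (c - t) P' := by
    intro p hp
    have h1 : p + t ∈ P := (hmemP' p).mp hp
    obtain ⟨h2, h3⟩ := hP _ h1
    constructor
    · omega
    · intro hc
      apply h3
      have h4 := (hmemP' (p+1)).mp hc
      have h5 : p + 1 + t = p + t + 1 := by omega
      rwa [h5] at h4
  -- S' avoids aM (c-t) P'
  have hS' : ∀ e ∈ S', e ∉ aM (c - t) P' := by
    intro e' he' habs
    obtain ⟨e, he, rfl⟩ := Finset.mem_image.mp he'
    obtain ⟨heS, hti⟩ := Finset.mem_filter.mp he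
    cases e with
    | vert i =>
      simp only [AEdge.idx] at hti
      simp only [AEdge.shift, vert_mem_aM] at habs
      obtain ⟨hlt, hncov⟩ := habs
      apply hS _ heS
      refine vert_mem_aM.mpr ⟨by omega, ?_⟩
      rintro (hiP | ⟨p, hpP, hpi⟩)
      · exact hncov (Or.inl (mem_shiftDown' hti hiP))
      · by_cases hpt : t ≤ p
        · exact hncov (Or.inr ⟨p - t, mem_shiftDown' hpt hpP, by omega⟩)
        · have : p = t - 1 := by omega
          exact hPt (this ▸ hpP)
    | top p =>
      simp only [AEdge.idx] at hti
      simp only [AEdge.shift, top_mem_aM, hmemP'] at habs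
      have : p - t + t = p := by omega
      rw [this] at habs
      exact hS _ heS (by simpa using habs)
    | bot p =>
      simp only [AEdge.idx] at hti
      simp only [AEdge.shift, bot_mem_aM, hmemP'] at habs
      have : p - t + t = p := by omega
      rw [this] at habs
      exact hS _ heS (by simpa using habs)
  -- S' hits every other tiling
  have hhit' : ∀ Q', AValid (c - t) Q' → Q' ≠ P' → ∃ e ∈ S', e ∈ aM (c - t) Q' := by
    intro Q' hQ' hne
    set Q : Finset ℕ := (P.filter (fun p => p < t)) ∪ Q'.image (· + t) with hQdef
    have hmemQ : ∀ y, y ∈ Q ↔ ((y ∈ P ∧ y < t) ∨ ∃ q ∈ Q', q + t = y) := by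
      intro y
      simp [hQdef, Finset.mem_union, Finset.mem_filter, Finset.mem_image]
    have hQvalid : AValid c Q := by
      intro p hp
      rcases (hmemQ p).mp hp with ⟨hpP, hpt⟩ | ⟨q, hq, rfl⟩
      · obtain ⟨h2, h3⟩ := hP _ hpP
        refine ⟨h2, fun hc => ?_⟩
        rcases (hmemQ (p+1)).mp hc with ⟨h4, _⟩ | ⟨q, hq, hqe⟩
        · exact h3 h4
        · have : p = t - 1 := by omega
          exact hPt (this ▸ hpP)
      · obtain ⟨h2, h3⟩ := hQ' _ hq
        refine ⟨by omega, fun hc => ?_⟩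
        rcases (hmemQ (q + t + 1)).mp hc with ⟨_, h5⟩ | ⟨q2, hq2, hq2e⟩
        · omega
        · have : q2 = q + 1 := by omega
          exact h3 (this ▸ hq2)
    have hQne : Q ≠ P := by
      intro hQP
      apply hne
      ext x
      rw [hmemP' x]
      constructor
      · intro hx
        have : x + t ∈ Q := (hmemQ (x+t)).mpr (Or.inr ⟨x, hx, rfl⟩)
        rwa [hQP] at this
      · intro hx
        have : x + t ∈ Q := hQP ▸ hx
        rcases (hmemQ (x+t)).mp this with ⟨_, h⟩ | ⟨q, hq, hqe⟩
        · omega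
        · have : q = x := by omega
          exact this ▸ hq
    obtain ⟨e, heS, heQ⟩ := hhit Q hQvalid hQne
    -- e has index ≥ t and its shift lies in aM (c-t) Q'
    have hkey : t ≤ e.idx ∧ e.shift t ∈ aM (c - t) Q' := by
      cases e with
      | vert i =>
        rcases vert_mem_aM.mp heQ with ⟨hic, hncov⟩
        have hit : t ≤ i := by
          by_contra hlt
          apply hS _ heS
          refine vert_mem_aM.mpr ⟨hic, ?_⟩
          rintro (hiP | ⟨p, hpP, hpi⟩)
          · exact hncov (Or.inl ((hmemQ i).mpr (Or.inl ⟨hiP, by omega⟩)))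
          · exact hncov (Or.inr ⟨p, (hmemQ p).mpr (Or.inl ⟨hpP, by omega⟩), hpi⟩)
        refine ⟨hit, ?_⟩
        simp only [AEdge.shift, vert_mem_aM]
        refine ⟨by omega, ?_⟩
        rintro (hiQ' | ⟨q, hqQ', hqi⟩)
        · exact hncov (Or.inl ((hmemQ i).mpr (Or.inr ⟨i - t, hiQ', by omega⟩)))
        · exact hncov (Or.inr ⟨q + t, (hmemQ (q+t)).mpr (Or.inr ⟨q, hqQ', rfl⟩), by omega⟩)
      | top p =>
        have hpQ : p ∈ Q := top_mem_aM.mp heQ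
        rcases (hmemQ p).mp hpQ with ⟨hpP, _⟩ | ⟨q, hq, rfl⟩
        · exact absurd (top_mem_aM.mpr hpP) (hS _ heS)
        · refine ⟨by simpa [AEdge.idx] using Nat.le_add_left t q, ?_⟩
          simp only [AEdge.shift, top_mem_aM]
          have : q + t - t = q := by omega
          rw [this]; exact hq
      | bot p =>
        have hpQ : p ∈ Q := bot_mem_aM.mp heQ
        rcases (hmemQ p).mp hpQ with ⟨hpP, _⟩ | ⟨q, hq, rfl⟩
        · exact absurd (bot_mem_aM.mpr hpP) (hS _ heS)
        · refine ⟨by simpa [AEdge.idx] using Nat.le_add_left t q, ?_⟩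
          simp only [AEdge.shift, bot_mem_aM]
          have : q + t - t = q := by omega
          rw [this]; exact hq
    exact ⟨e.shift t, Finset.mem_image_of_mem _ (Finset.mem_filter.mpr ⟨heS, hkey.1⟩), hkey.2⟩
  calc (c - t) / 2 ≤ S'.card := IH P' hP' S' hS' hhit'
    _ ≤ (S.filter (fun e => t ≤ e.idx)).card := Finset.card_image_le



lemma cov_mono {P Q : Finset ℕ} (h : P ⊆ Q) {i : ℕ} (hc : cov P i) : cov Q i := by
  rcases hc with h1 | ⟨p, hp, hpi⟩
  · exact Or.inl (h h1)
  · exact Or.inr ⟨p, h hp, hpi⟩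

lemma support_erase {c : ℕ} {P : Finset ℕ} {p : ℕ} (hp : p ∈ P) :
    ∀ e, e ∈ aM c (P.erase p) → e ∉ aM c P →
      e = AEdge.vert p ∨ e = AEdge.vert (p+1) := by
  intro e he hne
  cases e with
  | vert i =>
    obtain ⟨hic, hncov⟩ := vert_mem_aM.mp he
    have hcov : cov P i := by
      by_contra h
      exact hne (vert_mem_aM.mpr ⟨hic, h⟩)
    rcases hcov with hiP | ⟨q, hq, hqi⟩
    · by_cases hip : i = p
      · exact Or.inl (by rw [hip])
      · exact absurd (Or.inl (Finset.mem_erase.mpr ⟨hip, hiP⟩)) hncov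
    · by_cases hqp : q = p
      · exact Or.inr (by rw [← hqi, hqp])
      · exact absurd (Or.inr ⟨q, Finset.mem_erase.mpr ⟨hqp, hq⟩, hqi⟩) hncov
  | top q =>
    have := top_mem_aM.mp he
    exact absurd (top_mem_aM.mpr (Finset.mem_of_mem_erase this)) hne
  | bot q =>
    have := bot_mem_aM.mp he
    exact absurd (bot_mem_aM.mpr (Finset.mem_of_mem_erase this)) hne

lemma support_insert {c : ℕ} {P : Finset ℕ} (h0 : 0 ∉ P) :
    ∀ e, e ∈ aM c (insert 0 P) → e ∉ aM c P →
      e = AEdge.top 0 ∨ e = AEdge.bot 0 := by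
  intro e he hne
  cases e with
  | vert i =>
    obtain ⟨hic, hncov⟩ := vert_mem_aM.mp he
    exact absurd (vert_mem_aM.mpr ⟨hic, fun h => hncov (cov_mono (Finset.subset_insert _ _) h)⟩) hne
  | top q =>
    rcases Finset.mem_insert.mp (top_mem_aM.mp he) with h | h
    · exact Or.inl (by rw [h])
    · exact absurd (top_mem_aM.mpr h) hne
  | bot q =>
    rcases Finset.mem_insert.mp (bot_mem_aM.mp he) with h | h
    · exact Or.inr (by rw [h])
    · exact absurd (bot_mem_aM.mpr h) hne

theorem core : ∀ (c : ℕ) (P : Finset ℕ), AValid c P → ∀ S : Finset AEdge,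
    (∀ e ∈ S, e ∉ aM c P) →
    (∀ Q, AValid c Q → Q ≠ P → ∃ e ∈ S, e ∈ aM c Q) →
    c / 2 ≤ S.card := by
  intro c
  induction c using Nat.strong_induction_on with
  | _ c IH =>
    intro P hP S hS hhit
    by_cases hc1 : c ≤ 1
    · have : c / 2 = 0 := by omega
      rw [this]; exact Nat.zero_le _
    push_neg at hc1
    have hc2 : 2 ≤ c := hc1
    -- generic combination step
    have hcombine : ∀ t g : ℕ, t = 2 * g → 1 ≤ g → t ≤ c → t - 1 ∉ P →
        g ≤ (S.filter (fun e => ¬ t ≤ e.idx)).card → c / 2 ≤ S.card := by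
      intro t g htg hg1 htc hPt hg
      have hred : (c - t) / 2 ≤ (S.filter (fun e => t ≤ e.idx)).card := by
        apply reduce htc hP hPt S hS hhit
        intro P' hP' S' hS' hhit'
        exact IH (c - t) (by omega) P' hP' S' hS' hhit'
      have hsum : (S.filter (fun e => t ≤ e.idx)).card
          + (S.filter (fun e => ¬ t ≤ e.idx)).card = S.card :=
        Finset.card_filter_add_card_filter_not (s := S) (p := fun (e : AEdge) => t ≤ e.idx)
      omega
    by_cases h0 : 0 ∈ P
    · -- case (a): starts with a horizontal pair
      have h1 : 1 ∉ P := (hP 0 h0).2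
      apply hcombine 2 1 rfl le_rfl hc2 (by simpa using h1)
      apply card_hits (fun _ => {e | e ∈ aM c (P.erase 0) ∧ e ∉ aM c P})
      · intro i hi i' hi' hne e he
        omega
      · intro i hi
        obtain ⟨e, heS, heQ⟩ := hhit (P.erase 0) (hP.subset (Finset.erase_subset _ _))
          (fun h => (Finset.erase_eq_self.mp h) h0)
        have hne := hS e heS
        refine ⟨e, Finset.mem_filter.mpr ⟨heS, ?_⟩, heQ, hne⟩
        rcases support_erase h0 e heQ hne with rfl | rfl <;> simp [AEdge.idx]
    by_cases h1 : 1 ∈ P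
    case neg => -- case (b): two vertical columns at the start
      apply hcombine 2 1 rfl le_rfl hc2 (by simpa using h1)
      apply card_hits (fun _ => {e | e ∈ aM c (insert 0 P) ∧ e ∉ aM c P})
      · intro i hi i' hi' hne e he
        omega
      · intro i hi
        obtain ⟨e, heS, heQ⟩ := hhit (insert 0 P)
          (by
            intro p hp
            rcases Finset.mem_insert.mp hp with rfl | hpP
            · exact ⟨by omega, by simp [h1]⟩
            · exact ⟨(hP p hpP).1, by
                simp only [Finset.mem_insert]
                push_neg
                exact ⟨by omega, (hP p hpP).2⟩⟩)
          (fun h => h0 (h ▸ Finset.mem_insert_self 0 P))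
        have hne := hS e heS
        refine ⟨e, Finset.mem_filter.mpr ⟨heS, ?_⟩, heQ, hne⟩
        rcases support_insert h0 e heQ hne with rfl | rfl <;> simp [AEdge.idx]
    case pos => -- case (c): vertical column then horizontal pairs
      have hexj : ∃ t, 2*t+1 ∉ P := ⟨c, fun h => by have := (hP _ h).1; omega⟩
      set j := Nat.find hexj with hjdef
      have hjspec : 2*j+1 ∉ P := Nat.find_spec hexj
      have hjmin : ∀ i, i < j → 2*i+1 ∈ P := by
        intro i hi
        have := Nat.find_min hexj hi
        simpa using this
      have hj1 : 1 ≤ j := by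
        by_contra h
        push_neg at h
        interval_cases j
        exact hjspec (by simpa using h1)
      have hlow : ∀ p ∈ P, p ≤ 2*j+1 → ∃ i, i < j ∧ p = 2*i+1 := by
        intro p hp hple
        rcases Nat.even_or_odd p with ⟨i, hi⟩ | ⟨i, hi⟩
        · exfalso
          rcases Nat.eq_zero_or_pos i with rfl | hipos
          · exact h0 (by simpa [hi] using hp)
          · have h2 : 2*(i-1)+1 ∈ P := hjmin (i-1) (by omega)
            have h3 := (hP _ h2).2
            have h4 : 2*(i-1)+1+1 = p := by omega
            rw [h4] at h3
            exact h3 hp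
        · refine ⟨i, ?_, by omega⟩
          by_contra h
          push_neg at h
          have : p = 2*j+1 := by omega
          exact hjspec (this ▸ hp)
      have h2jc : 2*j < c := by
        have := (hP _ (hjmin (j-1) (by omega))).1
        omega
      by_cases hcc : c = 2*j+1
      · -- base subcase: the whole word is V P^j
        have hcard : j ≤ S.card := by
          apply card_hits (fun i => {e | e ∈ aM c (P.erase (2*i+1)) ∧ e ∉ aM c P})
          · intro i hi i' hi' hne e he he'
            have s1 := support_erase (hjmin i hi) e he.1 he.2
            have s2 := support_erase (hjmin i' hi') e he'.1 he'.2
            rcases s1 with rfl | rfl <;> rcases s2 with h | h <;>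
              · simp only [AEdge.vert.injEq] at h
                omega
          · intro i hi
            obtain ⟨e, heS, heQ⟩ := hhit (P.erase (2*i+1))
              (hP.subset (Finset.erase_subset _ _))
              (fun h => (Finset.erase_eq_self.mp h) (hjmin i hi))
            exact ⟨e, heS, heQ, hS e heS⟩
        omega
      · -- main subcase: strip the first 2j+2 columns
        have hcc2 : 2*j+2 ≤ c := by omega
        set Q0 : Finset ℕ :=
          (P.filter (fun p => 2*j+2 ≤ p)) ∪ (Finset.range (j+1)).image (fun i => 2*i)
          with hQ0def
        have hQ0mem : ∀ y, y ∈ Q0 ↔ ((y ∈ P ∧ 2*j+2 ≤ y) ∨ ∃ i, i ≤ j ∧ 2*i = y) := by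
          intro y
          simp [hQ0def, Finset.mem_union, Finset.mem_filter, Finset.mem_image,
            Nat.lt_succ_iff]
        have hQ0valid : AValid c Q0 := by
          intro p hp
          rcases (hQ0mem p).mp hp with ⟨hpP, hple⟩ | ⟨i, hij, rfl⟩
          · refine ⟨(hP _ hpP).1, fun hcon => ?_⟩
            rcases (hQ0mem _).mp hcon with ⟨h4, _⟩ | ⟨i, hij, hieq⟩
            · exact (hP _ hpP).2 h4
            · omega
          · refine ⟨by omega, fun hcon => ?_⟩
            rcases (hQ0mem _).mp hcon with ⟨_, h5⟩ | ⟨i', hij', hieq⟩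
            · omega
            · omega
        have hQ0ne : Q0 ≠ P := by
          intro h
          exact h0 (h ▸ ((hQ0mem 0).mpr (Or.inr ⟨0, by omega, by omega⟩)))
        have hsupp : ∀ e, e ∈ aM c Q0 → e ∉ aM c P →
            ∃ i, i ≤ j ∧ (e = AEdge.top (2*i) ∨ e = AEdge.bot (2*i)) := by
          intro e he hne
          cases e with
          | vert i =>
            obtain ⟨hic, hncov⟩ := vert_mem_aM.mp he
            have hcov : cov P i := by
              by_contra h
              exact hne (vert_mem_aM.mpr ⟨hic, h⟩)
            exfalso
            rcases hcov with hiP | ⟨q, hq, hqi⟩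
            · by_cases hge : 2*j+2 ≤ i
              · exact hncov (Or.inl ((hQ0mem i).mpr (Or.inl ⟨hiP, hge⟩)))
              · obtain ⟨t', ht', rfl⟩ := hlow i hiP (by omega)
                exact hncov (Or.inr ⟨2*t', (hQ0mem _).mpr (Or.inr ⟨t', by omega, rfl⟩), by omega⟩)
            · by_cases hge : 2*j+2 ≤ q
              · exact hncov (Or.inr ⟨q, (hQ0mem q).mpr (Or.inl ⟨hq, hge⟩), hqi⟩)
              · obtain ⟨t', ht', rfl⟩ := hlow q hq (by omega)
                exact hncov (Or.inl ((hQ0mem i).mpr (Or.inr ⟨t'+1, by omega, by omega⟩)))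
          | top q =>
            rcases (hQ0mem q).mp (top_mem_aM.mp he) with ⟨h4, _⟩ | ⟨i, hij, hieq⟩
            · exact absurd (top_mem_aM.mpr h4) hne
            · exact ⟨i, hij, Or.inl (by rw [hieq])⟩
          | bot q =>
            rcases (hQ0mem q).mp (bot_mem_aM.mp he) with ⟨h4, _⟩ | ⟨i, hij, hieq⟩
            · exact absurd (bot_mem_aM.mpr h4) hne
            · exact ⟨i, hij, Or.inr (by rw [hieq])⟩
        apply hcombine (2*j+2) (j+1) (by omega) (by omega) hcc2
          (by
            have h9 : 2*j+2-1 = 2*j+1 := by omega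
            rw [h9]
            exact hjspec)
        apply card_hits (fun i => if i < j
          then {e | e ∈ aM c (P.erase (2*i+1)) ∧ e ∉ aM c P}
          else {e | e ∈ aM c Q0 ∧ e ∉ aM c P})
        · intro i hi i' hi' hne e he he'
          by_cases hij : i < j <;> by_cases hij' : i' < j
          · rw [if_pos hij] at he
            rw [if_pos hij'] at he'
            have s1 := support_erase (hjmin i hij) e he.1 he.2
            have s2 := support_erase (hjmin i' hij') e he'.1 he'.2
            rcases s1 with rfl | rfl <;> rcases s2 with h | h <;>
              · simp only [AEdge.vert.injEq] at h
                omega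
          · rw [if_pos hij] at he
            rw [if_neg hij'] at he'
            have s1 := support_erase (hjmin i hij) e he.1 he.2
            have s2 := hsupp e he'.1 he'.2
            obtain ⟨i2, _, h | h⟩ := s2 <;> rcases s1 with rfl | rfl <;> simp at h
          · rw [if_neg hij] at he
            rw [if_pos hij'] at he'
            have s1 := hsupp e he.1 he.2
            have s2 := support_erase (hjmin i' hij') e he'.1 he'.2
            obtain ⟨i2, _, h | h⟩ := s1 <;> rcases s2 with h2 | h2 <;>
              (rw [h] at h2; simp at h2)
          · omega
        · intro i hi
          by_cases hij : i < j
          · obtain ⟨e, heS, heQ⟩ := hhit (P.erase (2*i+1))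
              (hP.subset (Finset.erase_subset _ _))
              (fun h => (Finset.erase_eq_self.mp h) (hjmin i hij))
            have hne := hS e heS
            refine ⟨e, Finset.mem_filter.mpr ⟨heS, ?_⟩, ?_⟩
            · rcases support_erase (hjmin i hij) e heQ hne with rfl | rfl <;>
                simp [AEdge.idx] <;> omega
            · rw [if_pos hij]
              exact ⟨heQ, hne⟩
          · obtain ⟨e, heS, heQ⟩ := hhit Q0 hQ0valid hQ0ne
            have hne := hS e heS
            refine ⟨e, Finset.mem_filter.mpr ⟨heS, ?_⟩, ?_⟩
            · obtain ⟨i2, hi2, h | h⟩ := hsupp e heQ hne <;>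
                · rw [h]
                  simp [AEdge.idx]
                  omega
            · rw [if_neg hij]
              exact ⟨heQ, hne⟩



/-- abstract in-range predicate for edges of the ladder with `c` columns -/
def EInR (c : ℕ) : AEdge → Prop
  | .vert i => i < c
  | .top i => i + 1 < c
  | .bot i => i + 1 < c

/-- the empty tiling (all-vertical matching) is valid -/
lemma avalid_empty (c : ℕ) : AValid c (∅ : Finset ℕ) := by
  intro p hp
  simp at hp

/-- lower bound `c - 1` for the all-vertical matching -/
lemma lower_vert {c : ℕ} (S : Finset AEdge)
    (hS : ∀ e ∈ S, e ∉ aM c (∅ : Finset ℕ))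
    (hhit : ∀ Q, AValid c Q → Q ≠ (∅ : Finset ℕ) → ∃ e ∈ S, e ∈ aM c Q) :
    c - 1 ≤ S.card := by
  apply card_hits (fun i => {e | e ∈ aM c ({i} : Finset ℕ) ∧ e ∉ aM c (∅ : Finset ℕ)})
  · have hsupp : ∀ i e, e ∈ aM c ({i} : Finset ℕ) → e ∉ aM c (∅ : Finset ℕ) →
        e = AEdge.top i ∨ e = AEdge.bot i := by
      intro i e he hne
      cases e with
      | vert x =>
        obtain ⟨hic, hncov⟩ := vert_mem_aM.mp he
        refine absurd (vert_mem_aM.mpr ⟨hic, fun h => ?_⟩) hne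
        rcases h with h | ⟨p, hp, _⟩
        · simp at h
        · simp at hp
      | top q => exact Or.inl (by rw [Finset.mem_singleton.mp (top_mem_aM.mp he)])
      | bot q => exact Or.inr (by rw [Finset.mem_singleton.mp (bot_mem_aM.mp he)])
    intro i hi i' hi' hne e he he'
    rcases hsupp i e he.1 he.2 with rfl | rfl
    · rcases hsupp i' _ he'.1 he'.2 with h | h
      · simp only [AEdge.top.injEq] at h; omega
      · exact absurd h (by simp)
    · rcases hsupp i' _ he'.1 he'.2 with h | h
      · exact absurd h (by simp)
      · simp only [AEdge.bot.injEq] at h; omega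
  · intro i hi
    obtain ⟨e, heS, heQ⟩ := hhit {i}
      (by intro p hp
          rw [Finset.mem_singleton] at hp
          subst hp
          exact ⟨by omega, by simp⟩)
      (by simp)
    exact ⟨e, heS, heQ, hS e heS⟩

/-- upper bound set for the all-vertical matching -/
lemma upper_vert {c : ℕ} (Q : Finset ℕ) (hQ : AValid c Q) (hne : Q ≠ ∅) :
    ∃ e ∈ (Finset.range (c-1)).image AEdge.top, e ∈ aM c Q := by
  obtain ⟨q, hq⟩ := Finset.nonempty_iff_ne_empty.mpr hne
  refine ⟨AEdge.top q, Finset.mem_image_of_mem _ (Finset.mem_range.mpr ?_), by simp [hq]⟩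
  have := (hQ q hq).1
  omega

/-- the maximal tiling: pairs at `0, 2, 4, …` -/
def Pmax (m : ℕ) : Finset ℕ := (Finset.range m).image (fun i => 2*i)

lemma mem_Pmax {m y : ℕ} : y ∈ Pmax m ↔ ∃ i, i < m ∧ 2*i = y := by
  simp [Pmax]

lemma Pmax_valid {n : ℕ} (hn : 1 ≤ n) : AValid (n+1) (Pmax ((n+1)/2)) := by
  intro p hp
  obtain ⟨i, hi, rfl⟩ := mem_Pmax.mp hp
  refine ⟨by omega, fun hcon => ?_⟩
  obtain ⟨i', hi', h⟩ := mem_Pmax.mp hcon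
  omega

/-- the anti-forcing set for `Pmax`: verticals at even columns -/
def Smax (m : ℕ) : Finset AEdge := (Finset.range m).image (fun i => AEdge.vert (2*i))

lemma Smax_card (m : ℕ) : (Smax m).card = m := by
  rw [Smax, Finset.card_image_of_injective _ (fun a b h => by
    simp only [AEdge.vert.injEq] at h; omega)]
  simp

lemma mem_Smax {m : ℕ} {e : AEdge} : e ∈ Smax m ↔ ∃ i, i < m ∧ e = AEdge.vert (2*i) := by
  simp [Smax, eq_comm]

lemma Smax_unique {n : ℕ} (hn : 1 ≤ n) (Q : Finset ℕ) (hQ : AValid (n+1) Q)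
    (havoid : ∀ e ∈ Smax ((n+1)/2), e ∉ aM (n+1) Q) : Q = Pmax ((n+1)/2) := by
  set m := (n+1)/2 with hm
  have hstep : ∀ i, i < m → 2*i ∈ Q := by
    intro i
    induction i using Nat.strong_induction_on with
    | _ i IH =>
      intro hi
      have hv : AEdge.vert (2*i) ∉ aM (n+1) Q :=
        havoid _ (mem_Smax.mpr ⟨i, hi, rfl⟩)
      rw [vert_mem_aM] at hv
      push_neg at hv
      have hcov : cov Q (2*i) := by
        by_contra h
        exact h (hv (by omega))
      rcases hcov with h | ⟨q, hq, hq2⟩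
      · exact h
      · exfalso
        have hi1 : 1 ≤ i := by
          rcases Nat.eq_zero_or_pos i with rfl | h'
          · omega
          · exact h'
        have h2 : 2*(i-1) ∈ Q := IH (i-1) (by omega) (by omega)
        have h3 : q = 2*(i-1)+1 := by omega
        exact (hQ _ h2).2 (h3 ▸ hq)
  ext y
  rw [mem_Pmax]
  constructor
  · intro hy
    have hyn : y + 1 < n + 1 := (hQ y hy).1
    rcases Nat.even_or_odd y with ⟨t, ht⟩ | ⟨t, ht⟩
    · exact ⟨t, by omega, by omega⟩
    · exfalso
      have h2t : 2*t ∈ Q := hstep t (by omega)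
      have := (hQ _ h2t).2
      exact this (ht ▸ hy)
  · rintro ⟨i, hi, rfl⟩
    exact hstep i hi

/-- general anti-forcing set of size `c - 1` for an arbitrary tiling `P` -/
def Sgen (c : ℕ) (P : Finset ℕ) : Finset AEdge :=
  ((Finset.range (c-1)).filter (fun i => i ∉ P)).image AEdge.top ∪ P.image AEdge.vert

lemma mem_Sgen {c : ℕ} {P : Finset ℕ} {e : AEdge} :
    e ∈ Sgen c P ↔ (∃ i, i < c - 1 ∧ i ∉ P ∧ e = AEdge.top i) ∨ (∃ p ∈ P, e = AEdge.vert p) := by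
  simp [Sgen, Finset.mem_union, Finset.mem_image, Finset.mem_filter, eq_comm, and_assoc]

lemma Sgen_card {c : ℕ} {P : Finset ℕ} (hP : AValid c P) : (Sgen c P).card = c - 1 := by
  have hsub : P ⊆ Finset.range (c-1) := by
    intro p hp
    rw [Finset.mem_range]
    have := (hP p hp).1
    omega
  have hdisj : Disjoint (((Finset.range (c-1)).filter (fun i => i ∉ P)).image AEdge.top)
      (P.image AEdge.vert) := by
    rw [Finset.disjoint_left]
    rintro e he1 he2
    obtain ⟨i, _, rfl⟩ := Finset.mem_image.mp he1
    obtain ⟨p, _, h⟩ := Finset.mem_image.mp he2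
    exact absurd h (by simp)
  rw [Sgen, Finset.card_union_of_disjoint hdisj,
    Finset.card_image_of_injective _ (fun a b h => by simpa using h),
    Finset.card_image_of_injective _ (fun a b h => by simpa using h)]
  have heq : (Finset.range (c-1)).filter (fun i => i ∉ P) = Finset.range (c-1) \ P := by
    ext x
    simp [Finset.mem_sdiff]
  rw [heq, Finset.card_sdiff_of_subset hsub, Finset.card_range]
  have := Finset.card_le_card hsub
  rw [Finset.card_range] at this
  omega

lemma Sgen_avoid {c : ℕ} {P : Finset ℕ} (hP : AValid c P) :
    ∀ e ∈ Sgen c P, EInR c e ∧ e ∉ aM c P := by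
  intro e he
  rcases mem_Sgen.mp he with ⟨i, hi, hiP, rfl⟩ | ⟨p, hp, rfl⟩
  · exact ⟨by show i + 1 < c; omega, by simp [hiP]⟩
  · refine ⟨by show p < c; have := (hP p hp).1; omega, ?_⟩
    rw [vert_mem_aM]
    push_neg
    intro _
    exact Or.inl hp

lemma Sgen_unique {c : ℕ} {P : Finset ℕ} (hP : AValid c P) (Q : Finset ℕ)
    (hQ : AValid c Q) (havoid : ∀ e ∈ Sgen c P, e ∉ aM c Q) : Q = P := by
  have hQP : Q ⊆ P := by
    intro q hq
    by_contra hqP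
    have h1 : AEdge.top q ∈ Sgen c P :=
      mem_Sgen.mpr (Or.inl ⟨q, by have := (hQ q hq).1; omega, hqP, rfl⟩)
    exact havoid _ h1 (top_mem_aM.mpr hq)
  have hPQ : P ⊆ Q := by
    intro p hp
    by_contra hpQ
    have h1 : AEdge.vert p ∈ Sgen c P := mem_Sgen.mpr (Or.inr ⟨p, hp, rfl⟩)
    apply havoid _ h1
    rw [vert_mem_aM]
    refine ⟨by have := (hP p hp).1; omega, ?_⟩
    rintro (h | ⟨r, hr, hrp⟩)
    · exact hpQ h
    · have hrP : r ∈ P := hQP hr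
      exact (hP r hrP).2 (hrp ▸ hp)
  exact Finset.Subset.antisymm hQP hPQ

lemma Smax_avoid {n : ℕ} (hn : 1 ≤ n) :
    ∀ e ∈ Smax ((n+1)/2), EInR (n+1) e ∧ e ∉ aM (n+1) (Pmax ((n+1)/2)) := by
  intro e he
  obtain ⟨i, hi, rfl⟩ := mem_Smax.mp he
  constructor
  · show 2*i < n+1
    omega
  · rw [vert_mem_aM]
    push_neg
    intro _
    exact Or.inl (mem_Pmax.mpr ⟨i, hi, rfl⟩)





open Fin.NatCast

/-- concretization of abstract edges -/
def iota (n : ℕ) : AEdge → Sym2 (Fin 2 × Fin (n+1))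
  | .vert i => s(((0:Fin 2), (i : Fin (n+1))), ((1:Fin 2), (i : Fin (n+1))))
  | .top i => s(((0:Fin 2), (i : Fin (n+1))), ((0:Fin 2), ((i+1 : ℕ) : Fin (n+1))))
  | .bot i => s(((1:Fin 2), (i : Fin (n+1))), ((1:Fin 2), ((i+1 : ℕ) : Fin (n+1))))

lemma val_cast {n i : ℕ} (h : i < n + 1) : ((i : Fin (n+1)) : ℕ) = i :=
  Fin.val_cast_of_lt h

/-- decoding function: a left inverse of `iota` -/
def dec (n : ℕ) : Sym2 (Fin 2 × Fin (n+1)) → AEdge :=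
  Sym2.lift ⟨fun u v =>
    if u.1 = v.1 then
      (if u.1 = (0 : Fin 2) then AEdge.top (min u.2.val v.2.val)
       else AEdge.bot (min u.2.val v.2.val))
    else AEdge.vert (min u.2.val v.2.val), by
      intro u v
      dsimp only
      by_cases h : u.1 = v.1
      · rw [if_pos h, if_pos h.symm, h, min_comm]
      · rw [if_neg h, if_neg (fun hh => h hh.symm), min_comm]⟩

lemma dec_iota {n : ℕ} {a : AEdge} (ha : EInR (n+1) a) : dec n (iota n a) = a := by
  cases a with
  | vert i =>
    have hi : i < n + 1 := ha
    simp only [iota, dec, Sym2.lift_mk]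
    rw [if_neg (by decide : ¬ (0:Fin 2) = 1), val_cast hi]
    congr 1
    omega
  | top i =>
    have hi : i + 1 < n + 1 := ha
    simp only [iota, dec, Sym2.lift_mk]
    rw [if_pos trivial, if_pos trivial, val_cast (show i < n+1 by omega), val_cast hi]
    congr 1
    omega
  | bot i =>
    have hi : i + 1 < n + 1 := ha
    simp only [iota, dec, Sym2.lift_mk]
    rw [if_pos trivial, if_neg (by decide : ¬ (1:Fin 2) = 0), val_cast hi,
      val_cast (show i < n+1 by omega)]
    congr 1
    omega

lemma iota_inj {n : ℕ} {a b : AEdge} (ha : EInR (n+1) a) (hb : EInR (n+1) b)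
    (h : iota n a = iota n b) : a = b := by
  have := congrArg (dec n) h
  rwa [dec_iota ha, dec_iota hb] at this


lemma iota_mem_edgeSet {n : ℕ} {a : AEdge} (ha : EInR (n+1) a) :
    iota n a ∈ (straightChain n).edgeSet := by
  cases a with
  | vert i =>
    have hi : i < n+1 := ha
    rw [iota, SimpleGraph.mem_edgeSet, straightChain, SimpleGraph.fromRel_adj]
    constructor
    · intro h
      have := congrArg Prod.fst h
      simp at this
    · exact Or.inl (Or.inr ⟨rfl, by simp⟩)
  | top i =>
    have hi : i + 1 < n+1 := ha
    rw [iota, SimpleGraph.mem_edgeSet, straightChain, SimpleGraph.fromRel_adj]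
    constructor
    · intro h
      have := congrArg (fun p => (p.2 : Fin (n+1)).val) h
      simp only [val_cast hi, val_cast (show i < n+1 by omega)] at this
      omega
    · exact Or.inl (Or.inl ⟨rfl, by rw [val_cast hi, val_cast (show i < n+1 by omega)]⟩)
  | bot i =>
    have hi : i + 1 < n+1 := ha
    rw [iota, SimpleGraph.mem_edgeSet, straightChain, SimpleGraph.fromRel_adj]
    constructor
    · intro h
      have := congrArg (fun p => (p.2 : Fin (n+1)).val) h
      simp only [val_cast hi, val_cast (show i < n+1 by omega)] at this
      omega
    · exact Or.inl (Or.inl ⟨rfl, by rw [val_cast hi, val_cast (show i < n+1 by omega)]⟩)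

lemma of_rel {n : ℕ} {u v : Fin 2 × Fin (n+1)}
    (h : (u.1 = v.1 ∧ u.2.val + 1 = v.2.val) ∨ (u.2 = v.2 ∧ u.1 ≠ v.1)) :
    ∃ a, EInR (n+1) a ∧ s(u,v) = iota n a := by
  obtain ⟨r, x⟩ := u
  obtain ⟨r', y⟩ := v
  rcases h with ⟨h1, h2⟩ | ⟨h1, h2⟩
  · simp only at h1 h2
    subst h1
    have hy : y = ((x.val + 1 : ℕ) : Fin (n+1)) := Fin.ext (by rw [val_cast (h2 ▸ y.isLt)]; omega)
    have hx : x = ((x.val : ℕ) : Fin (n+1)) := (Fin.cast_val_eq_self x).symm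
    fin_cases r
    · refine ⟨.top x.val, by show x.val + 1 < n+1; omega, ?_⟩
      rw [iota]
      rw [← hx, ← hy]
      rfl
    · refine ⟨.bot x.val, by show x.val + 1 < n+1; omega, ?_⟩
      rw [iota]
      rw [← hx, ← hy]
      rfl
  · simp only at h1 h2
    subst h1
    have hx : x = ((x.val : ℕ) : Fin (n+1)) := (Fin.cast_val_eq_self x).symm
    refine ⟨.vert x.val, by show x.val < n+1; omega, ?_⟩
    rw [iota, ← hx]
    fin_cases r <;> fin_cases r'
    · simp at h2
    · rfl
    · exact Sym2.eq_swap
    · simp at h2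

lemma edge_form {n : ℕ} {e : Sym2 (Fin 2 × Fin (n+1))} (he : e ∈ (straightChain n).edgeSet) :
    ∃ a, EInR (n+1) a ∧ e = iota n a := by
  induction e using Sym2.ind with
  | _ u v =>
    rw [SimpleGraph.mem_edgeSet, straightChain, SimpleGraph.fromRel_adj] at he
    obtain ⟨hne, h | h⟩ := he
    · exact of_rel h
    · obtain ⟨a, ha, h2⟩ := of_rel (n := n) (u := v) (v := u)
        (by tauto)
      exact ⟨a, ha, Sym2.eq_swap.trans h2⟩

lemma mem_iota_vert {n i : ℕ} (hi : i < n+1) {r : Fin 2} {x : Fin (n+1)} :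
    (r, x) ∈ iota n (.vert i) ↔ x.val = i := by
  constructor
  · intro h
    rcases Sym2.mem_iff.mp h with h | h <;>
      · simp only [Prod.mk.injEq] at h
        rw [h.2, val_cast hi]
  · intro h
    have hx : x = (i : Fin (n+1)) := Fin.ext (by rw [val_cast hi]; exact h)
    subst hx
    fin_cases r
    · exact Sym2.mem_iff.mpr (Or.inl rfl)
    · exact Sym2.mem_iff.mpr (Or.inr rfl)

lemma mem_iota_top {n i : ℕ} (hi : i + 1 < n+1) {r : Fin 2} {x : Fin (n+1)} :
    (r, x) ∈ iota n (.top i) ↔ r = 0 ∧ (x.val = i ∨ x.val = i + 1) := by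
  constructor
  · intro h
    rcases Sym2.mem_iff.mp h with h | h <;> simp only [Prod.mk.injEq] at h
    · exact ⟨h.1, Or.inl (by rw [h.2, val_cast (by omega)])⟩
    · exact ⟨h.1, Or.inr (by rw [h.2, val_cast hi])⟩
  · rintro ⟨rfl, h | h⟩
    · have hx : x = (i : Fin (n+1)) := Fin.ext (by rw [val_cast (by omega)]; exact h)
      subst hx
      exact Sym2.mem_iff.mpr (Or.inl rfl)
    · have hx : x = ((i+1 : ℕ) : Fin (n+1)) := Fin.ext (by rw [val_cast hi]; exact h)
      subst hx
      exact Sym2.mem_iff.mpr (Or.inr rfl)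

lemma mem_iota_bot {n i : ℕ} (hi : i + 1 < n+1) {r : Fin 2} {x : Fin (n+1)} :
    (r, x) ∈ iota n (.bot i) ↔ r = 1 ∧ (x.val = i ∨ x.val = i + 1) := by
  constructor
  · intro h
    rcases Sym2.mem_iff.mp h with h | h <;> simp only [Prod.mk.injEq] at h
    · exact ⟨h.1, Or.inl (by rw [h.2, val_cast (by omega)])⟩
    · exact ⟨h.1, Or.inr (by rw [h.2, val_cast hi])⟩
  · rintro ⟨rfl, h | h⟩
    · have hx : x = (i : Fin (n+1)) := Fin.ext (by rw [val_cast (by omega)]; exact h)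
      subst hx
      exact Sym2.mem_iff.mpr (Or.inl rfl)
    · have hx : x = ((i+1 : ℕ) : Fin (n+1)) := Fin.ext (by rw [val_cast hi]; exact h)
      subst hx
      exact Sym2.mem_iff.mpr (Or.inr rfl)


def cM (n : ℕ) (P : Finset ℕ) : Set (Sym2 (Fin 2 × Fin (n+1))) := iota n '' (aM (n+1) P)

lemma aM_EInR {c : ℕ} {P : Finset ℕ} (hP : AValid c P) {a : AEdge} (ha : a ∈ aM c P) :
    EInR c a := by
  cases a with
  | vert i => exact (vert_mem_aM.mp ha).1
  | top p => exact (hP p (top_mem_aM.mp ha)).1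
  | bot p => exact (hP p (bot_mem_aM.mp ha)).1

/-- shape of an `aM`-edge containing vertex `(r, x)` -/
lemma shape {n : ℕ} {P : Finset ℕ} (hP : AValid (n+1) P) {a : AEdge}
    (haM : a ∈ aM (n+1) P) {r : Fin 2} {x : Fin (n+1)} (hv : (r, x) ∈ iota n a) :
    (a = .vert x.val ∧ ¬ cov P x.val) ∨
    (r = 0 ∧ a = .top x.val ∧ x.val ∈ P) ∨
    (r = 0 ∧ ∃ p ∈ P, p + 1 = x.val ∧ a = .top p) ∨
    (r = 1 ∧ a = .bot x.val ∧ x.val ∈ P) ∨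
    (r = 1 ∧ ∃ p ∈ P, p + 1 = x.val ∧ a = .bot p) := by
  have hein := aM_EInR hP haM
  cases a with
  | vert i =>
    obtain ⟨hic, hncov⟩ := vert_mem_aM.mp haM
    have := (mem_iota_vert hic).mp hv
    exact Or.inl ⟨by rw [this], this ▸ hncov⟩
  | top p =>
    have hpP := top_mem_aM.mp haM
    obtain ⟨hr, h | h⟩ := (mem_iota_top hein).mp hv
    · exact Or.inr (Or.inl ⟨hr, by rw [h], h ▸ hpP⟩)
    · exact Or.inr (Or.inr (Or.inl ⟨hr, p, hpP, by omega, rfl⟩))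
  | bot p =>
    have hpP := bot_mem_aM.mp haM
    obtain ⟨hr, h | h⟩ := (mem_iota_bot hein).mp hv
    · exact Or.inr (Or.inr (Or.inr (Or.inl ⟨hr, by rw [h], h ▸ hpP⟩)))
    · exact Or.inr (Or.inr (Or.inr (Or.inr ⟨hr, p, hpP, by omega, rfl⟩)))

lemma shape_unique {n : ℕ} {P : Finset ℕ} (hP : AValid (n+1) P) {a b : AEdge}
    (haM : a ∈ aM (n+1) P) (hbM : b ∈ aM (n+1) P) {r : Fin 2} {x : Fin (n+1)}
    (hva : (r, x) ∈ iota n a) (hvb : (r, x) ∈ iota n b) : a = b := by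
  have hcov1 : x.val ∈ P → cov P x.val := fun h => Or.inl h
  have hcov2 : ∀ p ∈ P, p + 1 = x.val → cov P x.val := fun p hp h => Or.inr ⟨p, hp, h⟩
  have key : ∀ e : AEdge, e ∈ aM (n+1) P → (r, x) ∈ iota n e →
      (e = .vert x.val ∧ ¬ cov P x.val) ∨
      (r = 0 ∧ e = .top x.val ∧ x.val ∈ P) ∨
      (r = 0 ∧ ∃ p ∈ P, p + 1 = x.val ∧ e = .top p) ∨
      (r = 1 ∧ e = .bot x.val ∧ x.val ∈ P) ∨
      (r = 1 ∧ ∃ p ∈ P, p + 1 = x.val ∧ e = .bot p) := fun e h1 h2 => shape hP h1 h2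
  rcases key a haM hva with ⟨rfl, h1⟩ | ⟨hr, rfl, h1⟩ | ⟨hr, p, hp1, hp2, rfl⟩ |
      ⟨hr, rfl, h1⟩ | ⟨hr, p, hp1, hp2, rfl⟩ <;>
    rcases key b hbM hvb with ⟨rfl, h2⟩ | ⟨hr', rfl, h2⟩ | ⟨hr', q, hq1, hq2, rfl⟩ |
      ⟨hr', rfl, h2⟩ | ⟨hr', q, hq1, hq2, rfl⟩ <;>
    first
      | rfl
      | (congr 1; omega)
      | (exact absurd (hcov1 h2) h1)
      | (exact absurd (hcov1 h1) h2)
      | (exact absurd (hcov2 _ hq1 hq2) h1)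
      | (exact absurd (hcov2 _ hp1 hp2) h2)
      | (exact absurd ((hP _ hp1).2) (fun hc => hc (hp2 ▸ h2)))
      | (exact absurd ((hP _ hq1).2) (fun hc => hc (hq2 ▸ h1)))
      | (rw [hr] at hr'; exact absurd hr' (by simp))
      | (rw [hr'] at hr; exact absurd hr (by simp))
      | (congr 1; omega)
      | (exact absurd rfl (by simp))


lemma einr_vert {c i : ℕ} (h : i < c) : EInR c (.vert i) := h
lemma einr_top {c i : ℕ} (h : i + 1 < c) : EInR c (.top i) := h
lemma einr_bot {c i : ℕ} (h : i + 1 < c) : EInR c (.bot i) := h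

lemma isPM_cM {n : ℕ} {P : Finset ℕ} (hP : AValid (n+1) P) :
    IsPM (straightChain n) (cM n P) := by
  constructor
  · rintro e ⟨a, ha, rfl⟩
    exact iota_mem_edgeSet (aM_EInR hP ha)
  · rintro ⟨r, x⟩
    have hex : ∃ a ∈ aM (n+1) P, (r, x) ∈ iota n a := by
      by_cases hcov : cov P x.val
      · rcases hcov with h | ⟨p, hp, hpx⟩
        · have hein : x.val + 1 < n + 1 := (hP _ h).1
          fin_cases r
          · exact ⟨.top x.val, top_mem_aM.mpr h, (mem_iota_top hein).mpr ⟨rfl, Or.inl rfl⟩⟩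
          · exact ⟨.bot x.val, bot_mem_aM.mpr h, (mem_iota_bot hein).mpr ⟨rfl, Or.inl rfl⟩⟩
        · have hein : p + 1 < n + 1 := (hP _ hp).1
          fin_cases r
          · exact ⟨.top p, top_mem_aM.mpr hp, (mem_iota_top hein).mpr ⟨rfl, Or.inr hpx.symm⟩⟩
          · exact ⟨.bot p, bot_mem_aM.mpr hp, (mem_iota_bot hein).mpr ⟨rfl, Or.inr hpx.symm⟩⟩
      · exact ⟨.vert x.val, vert_mem_aM.mpr ⟨x.isLt, hcov⟩, (mem_iota_vert x.isLt).mpr rfl⟩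
    obtain ⟨a, haM, hva⟩ := hex
    refine ⟨iota n a, ⟨⟨a, haM, rfl⟩, hva⟩, ?_⟩
    rintro e' ⟨⟨b, hbM, rfl⟩, hvb⟩
    exact congrArg (iota n) (shape_unique hP hbM haM hvb hva)

lemma classify {n : ℕ} {M : Set (Sym2 (Fin 2 × Fin (n+1)))}
    (hM : IsPM (straightChain n) M) : ∃ P, AValid (n+1) P ∧ M = cM n P := by
  obtain ⟨hsub, huniq⟩ := hM
  have tool1 : ∀ e1 ∈ M, ∀ e2 ∈ M, ∀ v : Fin 2 × Fin (n+1), v ∈ e1 → v ∈ e2 → e1 = e2 := by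
    intro e1 h1 e2 h2 v hv1 hv2
    obtain ⟨e, _, hu⟩ := huniq v
    rw [hu e1 ⟨h1, hv1⟩, hu e2 ⟨h2, hv2⟩]
  have tool2 : ∀ v : Fin 2 × Fin (n+1), ∃ a, EInR (n+1) a ∧ iota n a ∈ M ∧ v ∈ iota n a := by
    intro v
    obtain ⟨e, ⟨heM, hve⟩, _⟩ := huniq v
    obtain ⟨a, ha, rfl⟩ := edge_form (hsub heM)
    exact ⟨a, ha, heM, hve⟩
  have tool1' : ∀ a b : AEdge, EInR (n+1) a → EInR (n+1) b → iota n a ∈ M → iota n b ∈ M →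
      ∀ v, v ∈ iota n a → v ∈ iota n b → a = b := by
    intro a b ha hb hMa hMb v hva hvb
    exact iota_inj ha hb (tool1 _ hMa _ hMb v hva hvb)
  have topbot : ∀ i, i < n → (iota n (.top i) ∈ M ↔ iota n (.bot i) ∈ M) := by
    intro i
    induction i using Nat.strong_induction_on with
    | _ i IH =>
      intro hin
      have hi1 : i + 1 < n + 1 := by omega
      constructor
      · intro hT
        obtain ⟨a, ha, haM, hva⟩ := tool2 (1, ((i:ℕ) : Fin (n+1)))
        cases a with
        | vert k =>
          have hk : k = i := by
            have := (mem_iota_vert ha).mp hva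
            rw [val_cast (by omega)] at this
            omega
          subst hk
          exfalso
          have := tool1' (.vert k) (.top k) ha (einr_top (by omega)) haM hT
            (0, ((k:ℕ) : Fin (n+1)))
            ((mem_iota_vert (by omega)).mpr (val_cast (by omega)))
            ((mem_iota_top (by omega)).mpr ⟨rfl, Or.inl (val_cast (by omega))⟩)
          simp at this
        | top k =>
          have := ((mem_iota_top ha).mp hva).1
          exact absurd this (by simp)
        | bot k =>
          have hk1 : k + 1 < n + 1 := ha
          obtain ⟨-, h | h⟩ := (mem_iota_bot ha).mp hva <;>
            rw [val_cast (by omega)] at h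
          · rw [h]
            exact haM
          · exfalso
            have hkM : iota n (.top k) ∈ M := (IH k (by omega) (by omega)).mpr haM
            have := tool1' (.top k) (.top i) (einr_top (by omega)) (einr_top (by omega)) hkM hT
              (0, ((i:ℕ) : Fin (n+1)))
              ((mem_iota_top (by omega)).mpr ⟨rfl, Or.inr (by rw [val_cast (by omega)]; omega)⟩)
              ((mem_iota_top (by omega)).mpr ⟨rfl, Or.inl (val_cast (by omega))⟩)
            simp only [AEdge.top.injEq] at this
            omega
      · intro hB
        obtain ⟨a, ha, haM, hva⟩ := tool2 (0, ((i:ℕ) : Fin (n+1)))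
        cases a with
        | vert k =>
          have hk : k = i := by
            have := (mem_iota_vert ha).mp hva
            rw [val_cast (by omega)] at this
            omega
          subst hk
          exfalso
          have := tool1' (.vert k) (.bot k) ha (einr_bot (by omega)) haM hB
            (1, ((k:ℕ) : Fin (n+1)))
            ((mem_iota_vert (by omega)).mpr (val_cast (by omega)))
            ((mem_iota_bot (by omega)).mpr ⟨rfl, Or.inl (val_cast (by omega))⟩)
          simp at this
        | bot k =>
          have := ((mem_iota_bot ha).mp hva).1
          exact absurd this (by simp)
        | top k =>
          have hk1 : k + 1 < n + 1 := ha
          obtain ⟨-, h | h⟩ := (mem_iota_top ha).mp hva <;>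
            rw [val_cast (by omega)] at h
          · rw [h]
            exact haM
          · exfalso
            have hkM : iota n (.bot k) ∈ M := (IH k (by omega) (by omega)).mp haM
            have := tool1' (.bot k) (.bot i) (einr_bot (by omega)) (einr_bot (by omega)) hkM hB
              (1, ((i:ℕ) : Fin (n+1)))
              ((mem_iota_bot (by omega)).mpr ⟨rfl, Or.inr (by rw [val_cast (by omega)]; omega)⟩)
              ((mem_iota_bot (by omega)).mpr ⟨rfl, Or.inl (val_cast (by omega))⟩)
            simp only [AEdge.bot.injEq] at this
            omega
  set P : Finset ℕ := (Finset.range n).filter (fun i => iota n (.top i) ∈ M) with hPdef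
  have hmemP : ∀ i, i ∈ P ↔ i < n ∧ iota n (.top i) ∈ M := by
    intro i
    simp [hPdef]
  have hPvalid : AValid (n+1) P := by
    intro p hp
    obtain ⟨hpn, hpM⟩ := (hmemP p).mp hp
    refine ⟨by omega, fun hc => ?_⟩
    obtain ⟨hc1, hcM⟩ := (hmemP _).mp hc
    have := tool1' (.top p) (.top (p+1)) (einr_top (by omega)) (einr_top (by omega))
      hpM hcM (0, ((p+1 : ℕ) : Fin (n+1)))
      ((mem_iota_top (by omega)).mpr ⟨rfl, Or.inr (by rw [val_cast (by omega)])⟩)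
      ((mem_iota_top (by omega)).mpr ⟨rfl, Or.inl (val_cast (by omega))⟩)
    simp only [AEdge.top.injEq] at this
    omega
  have hvert : ∀ i, i < n + 1 → (iota n (.vert i) ∈ M ↔ ¬ cov P i) := by
    intro i hin
    constructor
    · intro hV
      rintro (hiP | ⟨p, hp, hpi⟩)
      · obtain ⟨hilt, hiM⟩ := (hmemP i).mp hiP
        have := tool1' (.vert i) (.top i) (einr_vert (by omega)) (einr_top (by omega)) hV hiM
          (0, ((i:ℕ) : Fin (n+1)))
          ((mem_iota_vert (by omega)).mpr (val_cast (by omega)))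
          ((mem_iota_top (by omega)).mpr ⟨rfl, Or.inl (val_cast (by omega))⟩)
        simp at this
      · obtain ⟨hplt, hpM⟩ := (hmemP p).mp hp
        have := tool1' (.vert i) (.top p) (einr_vert (by omega)) (einr_top (by omega)) hV hpM
          (0, ((i:ℕ) : Fin (n+1)))
          ((mem_iota_vert (by omega)).mpr (val_cast (by omega)))
          ((mem_iota_top (by omega)).mpr ⟨rfl, Or.inr (by rw [val_cast (by omega)]; omega)⟩)
        simp at this
    · intro hncov
      obtain ⟨a, ha, haM, hva⟩ := tool2 (0, ((i:ℕ) : Fin (n+1)))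
      cases a with
      | vert k =>
        have hk : k = i := by
          have := (mem_iota_vert ha).mp hva
          rw [val_cast (by omega)] at this
          omega
        rw [← hk]
        exact haM
      | top k =>
        exfalso
        have hk1 : k + 1 < n + 1 := ha
        obtain ⟨-, h | h⟩ := (mem_iota_top ha).mp hva <;>
          rw [val_cast (by omega)] at h
        · exact hncov (Or.inl (by rw [h]; exact (hmemP k).mpr ⟨by omega, haM⟩))
        · exact hncov (Or.inr ⟨k, (hmemP k).mpr ⟨by omega, haM⟩, by omega⟩)
      | bot k =>
        have := ((mem_iota_bot ha).mp hva).1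
        exact absurd this (by simp)
  refine ⟨P, hPvalid, ?_⟩
  ext e
  constructor
  · intro heM
    obtain ⟨a, ha, rfl⟩ := edge_form (hsub heM)
    cases a with
    | vert i =>
      exact ⟨.vert i, vert_mem_aM.mpr ⟨ha, (hvert i ha).mp heM⟩, rfl⟩
    | top i =>
      have hi : i + 1 < n + 1 := ha
      exact ⟨.top i, top_mem_aM.mpr ((hmemP i).mpr ⟨by omega, heM⟩), rfl⟩
    | bot i =>
      have hi : i + 1 < n + 1 := ha
      have := (topbot i (by omega)).mpr heM
      exact ⟨.bot i, bot_mem_aM.mpr ((hmemP i).mpr ⟨by omega, this⟩), rfl⟩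
  · rintro ⟨a, haM, rfl⟩
    cases a with
    | vert i =>
      obtain ⟨hic, hncov⟩ := vert_mem_aM.mp haM
      exact (hvert i hic).mpr hncov
    | top p =>
      exact ((hmemP p).mp (top_mem_aM.mp haM)).2
    | bot p =>
      obtain ⟨hplt, hpM⟩ := (hmemP p).mp (bot_mem_aM.mp haM)
      exact (topbot p hplt).mp hpM


lemma isPM_deleteEdges_iff {G : SimpleGraph V} {S M : Set (Sym2 V)} :
    IsPM (G.deleteEdges S) M ↔ IsPM G M ∧ ∀ e ∈ M, e ∉ S := by
  unfold IsPM
  rw [SimpleGraph.edgeSet_deleteEdges]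
  constructor
  · rintro ⟨h1, h2⟩
    exact ⟨⟨fun e he => (h1 he).1, h2⟩, fun e he => (h1 he).2⟩
  · rintro ⟨⟨h1, h2⟩, h3⟩
    exact ⟨fun e he => ⟨h1 he, h3 e he⟩, h2⟩

lemma cM_inj {n : ℕ} {P Q : Finset ℕ} (hP : AValid (n+1) P) (hQ : AValid (n+1) Q)
    (h : cM n P = cM n Q) : P = Q := by
  apply aM_inj (c := n+1)
  ext a
  constructor
  · intro ha
    have : iota n a ∈ cM n Q := h ▸ ⟨a, ha, rfl⟩
    obtain ⟨b, hb, heq⟩ := this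
    rwa [iota_inj (aM_EInR hQ hb) (aM_EInR hP ha) heq] at hb
  · intro ha
    have : iota n a ∈ cM n P := h ▸ ⟨a, ha, rfl⟩
    obtain ⟨b, hb, heq⟩ := this
    rwa [iota_inj (aM_EInR hP hb) (aM_EInR hQ ha) heq] at hb

lemma antiforcing_of_abstract {n : ℕ} {P : Finset ℕ} (hP : AValid (n+1) P)
    (T : Finset AEdge) (hT : ∀ e ∈ T, EInR (n+1) e ∧ e ∉ aM (n+1) P)
    (huniq : ∀ Q, AValid (n+1) Q → (∀ e ∈ T, e ∉ aM (n+1) Q) → Q = P) :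
    ∃ S : Finset (Sym2 (Fin 2 × Fin (n+1))), S.card = T.card ∧
      IsAntiForcingSet (straightChain n) (cM n P) ↑S := by
  have hinj : Set.InjOn (iota n) ↑T := fun a ha b hb h =>
    iota_inj (hT a (Finset.mem_coe.mp ha)).1 (hT b (Finset.mem_coe.mp hb)).1 h
  refine ⟨T.image (iota n), Finset.card_image_of_injOn hinj, ?_, ?_, ?_⟩
  · intro e he
    rw [Finset.coe_image] at he
    obtain ⟨a, ha, rfl⟩ := he
    refine ⟨iota_mem_edgeSet (hT a ha).1, ?_⟩
    rintro ⟨b, hb, heq⟩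
    rw [iota_inj (aM_EInR hP hb) (hT a ha).1 heq] at hb
    exact (hT a ha).2 hb
  · rw [isPM_deleteEdges_iff]
    refine ⟨isPM_cM hP, ?_⟩
    rintro e ⟨a, ha, rfl⟩ hs
    rw [Finset.mem_coe, Finset.mem_image] at hs
    obtain ⟨b, hb, heq⟩ := hs
    have hba : b = a := iota_inj (hT b hb).1 (aM_EInR hP ha) heq
    subst hba
    exact (hT b hb).2 ha
  · intro M' hM'
    rw [isPM_deleteEdges_iff] at hM'
    obtain ⟨hM'PM, hM'S⟩ := hM'
    obtain ⟨Q, hQ, rfl⟩ := classify hM'PM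
    refine congrArg _ (huniq Q hQ ?_)
    intro a haT haQ
    apply hM'S (iota n a) ⟨a, haQ, rfl⟩
    rw [Finset.mem_coe, Finset.mem_image]
    exact ⟨a, haT, rfl⟩

def allE (n : ℕ) : Finset AEdge :=
  ((Finset.range (n+1)).image AEdge.vert ∪ (Finset.range n).image AEdge.top) ∪
    (Finset.range n).image AEdge.bot

lemma mem_allE {n : ℕ} {a : AEdge} : a ∈ allE n ↔ EInR (n+1) a := by
  cases a with
  | vert i =>
    simp only [allE, Finset.mem_union, Finset.mem_image, Finset.mem_range]
    constructor
    · rintro ((⟨i', hi', h⟩ | ⟨i', hi', h⟩) | ⟨i', hi', h⟩) <;> first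
        | (injection h with h; subst h; exact hi')
        | (exact absurd h (by simp))
    · intro h
      exact Or.inl (Or.inl ⟨i, h, rfl⟩)
  | top i =>
    simp only [allE, Finset.mem_union, Finset.mem_image, Finset.mem_range]
    constructor
    · rintro ((⟨i', hi', h⟩ | ⟨i', hi', h⟩) | ⟨i', hi', h⟩) <;> first
        | (injection h with h; subst h; exact Nat.succ_lt_succ hi')
        | (exact absurd h (by simp))
    · intro h
      have : i + 1 < n + 1 := h
      exact Or.inl (Or.inr ⟨i, by omega, rfl⟩)
  | bot i =>
    simp only [allE, Finset.mem_union, Finset.mem_image, Finset.mem_range]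
    constructor
    · rintro ((⟨i', hi', h⟩ | ⟨i', hi', h⟩) | ⟨i', hi', h⟩) <;> first
        | (injection h with h; subst h; exact Nat.succ_lt_succ hi')
        | (exact absurd h (by simp))
    · intro h
      have : i + 1 < n + 1 := h
      exact Or.inr ⟨i, by omega, rfl⟩

lemma abstract_of_antiforcing {n : ℕ} {P : Finset ℕ} (hP : AValid (n+1) P)
    (S : Finset (Sym2 (Fin 2 × Fin (n+1))))
    (hanti : IsAntiForcingSet (straightChain n) (cM n P) ↑S) :
    ∃ T : Finset AEdge, T.card ≤ S.card ∧ (∀ e ∈ T, e ∉ aM (n+1) P) ∧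
      (∀ Q, AValid (n+1) Q → Q ≠ P → ∃ e ∈ T, e ∈ aM (n+1) Q) := by
  obtain ⟨hSsub, hSPM, hSuniq⟩ := hanti
  set T : Finset AEdge := (allE n).filter (fun a => iota n a ∈ S) with hTdef
  have hmemT : ∀ a, a ∈ T ↔ (EInR (n+1) a ∧ iota n a ∈ S) := by
    intro a
    rw [hTdef, Finset.mem_filter, mem_allE]
  refine ⟨T, ?_, ?_, ?_⟩
  · apply Finset.card_le_card_of_injOn (iota n)
    · intro a ha
      exact ((hmemT a).mp ha).2
    · intro a ha b hb h
      exact iota_inj ((hmemT a).mp (by simpa using ha)).1 ((hmemT b).mp (by simpa using hb)).1 h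
  · intro a haT haM
    have h1 := hSsub (Finset.mem_coe.mpr ((hmemT a).mp haT).2)
    exact h1.2 ⟨a, haM, rfl⟩
  · intro Q hQ hne
    by_contra hno
    push_neg at hno
    have hPM' : IsPM ((straightChain n).deleteEdges ↑S) (cM n Q) := by
      rw [isPM_deleteEdges_iff]
      refine ⟨isPM_cM hQ, ?_⟩
      rintro e ⟨a, ha, rfl⟩ hs
      have haT : a ∈ T := (hmemT a).mpr ⟨aM_EInR hQ ha, Finset.mem_coe.mp hs⟩
      exact hno a haT ha
    exact hne (cM_inj hQ hP (hSuniq _ hPM'))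


lemma af_nonempty {n : ℕ} {P : Finset ℕ} (hP : AValid (n+1) P) :
    {m | ∃ S : Finset (Sym2 (Fin 2 × Fin (n+1))), S.card = m ∧
      IsAntiForcingSet (straightChain n) (cM n P) ↑S}.Nonempty := by
  obtain ⟨S, hcard, hanti⟩ := antiforcing_of_abstract hP (Sgen (n+1) P)
    (Sgen_avoid hP) (fun Q hQ hav => Sgen_unique hP Q hQ hav)
  exact ⟨S.card, S, rfl, hanti⟩

lemma af_le_n {n : ℕ} {P : Finset ℕ} (hP : AValid (n+1) P) :
    af (straightChain n) (cM n P) ≤ n := by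
  obtain ⟨S, hcard, hanti⟩ := antiforcing_of_abstract hP (Sgen (n+1) P)
    (Sgen_avoid hP) (fun Q hQ hav => Sgen_unique hP Q hQ hav)
  have hc : S.card = n := by
    rw [hcard, Sgen_card hP]
    omega
  exact Nat.sInf_le ⟨S, hc, hanti⟩

lemma af_ge_half {n : ℕ} {P : Finset ℕ} (hP : AValid (n+1) P) :
    (n+1)/2 ≤ af (straightChain n) (cM n P) := by
  apply le_csInf (af_nonempty hP)
  rintro m ⟨S, rfl, hanti⟩
  obtain ⟨T, hTle, hTav, hThit⟩ := abstract_of_antiforcing hP S hanti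
  exact le_trans (core (n+1) P hP T hTav hThit) hTle

lemma af_vert_ge {n : ℕ} : n ≤ af (straightChain n) (cM n ∅) := by
  apply le_csInf (af_nonempty (avalid_empty (n+1)))
  rintro m ⟨S, rfl, hanti⟩
  obtain ⟨T, hTle, hTav, hThit⟩ := abstract_of_antiforcing (avalid_empty _) S hanti
  have := lower_vert (c := n+1) T hTav hThit
  omega

lemma af_pmax_le {n : ℕ} (hn : 1 ≤ n) :
    af (straightChain n) (cM n (Pmax ((n+1)/2))) ≤ (n+1)/2 := by
  obtain ⟨S, hcard, hanti⟩ := antiforcing_of_abstract (Pmax_valid hn) (Smax ((n+1)/2))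
    (Smax_avoid hn) (fun Q hQ hav => Smax_unique hn Q hQ hav)
  exact Nat.sInf_le ⟨S, by rw [hcard, Smax_card], hanti⟩




end SC19

open SC19

/-- For the straight chain polyomino `G` with `n ≥ 1` squares,
`af(G) = ⌈n / 2⌉` and `Af(G) = n`. -/
theorem statement19 (n : ℕ) (hn : 1 ≤ n) :
    afMin (straightChain n) = (n + 1) / 2 ∧ Af (straightChain n) = n := by

  have hvalid0 : AValid (n+1) (∅ : Finset ℕ) := avalid_empty _
  have hmaxvalid : AValid (n+1) (Pmax ((n+1)/2)) := Pmax_valid hn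
  have hafmax : af (straightChain n) (cM n (Pmax ((n+1)/2))) = (n+1)/2 :=
    le_antisymm (af_pmax_le hn) (af_ge_half hmaxvalid)
  have hafvert : af (straightChain n) (cM n ∅) = n :=
    le_antisymm (af_le_n hvalid0) af_vert_ge
  have hne1 : {m | ∃ M, IsPM (straightChain n) M ∧ af (straightChain n) M = m}.Nonempty :=
    ⟨(n+1)/2, cM n (Pmax ((n+1)/2)), isPM_cM hmaxvalid, hafmax⟩
  constructor
  · apply le_antisymm
    · exact Nat.sInf_le ⟨cM n (Pmax ((n+1)/2)), isPM_cM hmaxvalid, hafmax⟩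
    · apply le_csInf hne1
      rintro m ⟨M, hM, rfl⟩
      obtain ⟨P, hP, rfl⟩ := classify hM
      exact af_ge_half hP
  · apply le_antisymm
    · apply csSup_le hne1
      rintro m ⟨M, hM, rfl⟩
      obtain ⟨P, hP, rfl⟩ := classify hM
      exact af_le_n hP
    · apply le_csSup
      · refine ⟨n, fun m hm => ?_⟩
        obtain ⟨M, hM, rfl⟩ := hm
        obtain ⟨P, hP, rfl⟩ := classify hM
        exact af_le_n hP
      · exact ⟨cM n ∅, isPM_cM hvalid0, hafvert⟩
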